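/- The spectral radius of the (n+m)×(n+m) blossom matrix A equals cos(π/(2n+m+1)) if m is even; cos(2π/(2n+m+1)) if m is odd and m ≤ 2n−1; and cos(π/(m+1)) if m is odd and m > 2n−1. -/

import Mathlib

open Real

/-- For `0 ≤ y ≤ x` with `x + y ≤ 1`, the absolute value of `cos (π x)` is at
most `cos (π y)`. -/
lemma blossom_abs_cos_le (x y : ℝ) (h0 : 0 ≤ y) (h1 : y ≤ x) (h2 : x + y ≤ 1) :
    |Real.cos (π * x)| ≤ Real.cos (π * y) := by
  have hπ := Real.pi_pos
  rw [abs_le]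
  constructor
  · have h := Real.cos_le_cos_of_nonneg_of_le_pi (x := π * y) (y := π - π * x)
      (by positivity) (by nlinarith) (by nlinarith)
    rw [Real.cos_pi_sub] at h
    linarith
  · exact Real.cos_le_cos_of_nonneg_of_le_pi (by positivity) (by nlinarith)
      (by nlinarith)

set_option maxHeartbeats 1000000 in
/-- The spectral radius of the blossom matrix equals cos(π/(2n+m+1)) if m is
even; cos(2π/(2n+m+1)) if m is odd and m ≤ 2n−1; and cos(π/(m+1)) if m is odd
and m > 2n−1. -/
theorem blossom_spectral_radius (n m : ℕ) (hn : 1 ≤ n) (hm : 1 ≤ m)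
    (A : Matrix (Fin (n + m)) (Fin (n + m)) ℝ)
    (hA : {μ : ℝ | ∃ v : Fin (n + m) → ℝ, v ≠ 0 ∧ A.mulVec v = μ • v}
      = (fun k : ℕ => Real.cos (2 * π * k / (2 * n + m + 1))) ''
          (Set.Icc 1 (n + m / 2))
        ∪ (fun k : ℕ => Real.cos (π * (2 * k - 1 : ℕ) / (m + 1))) ''
            (Set.Icc 1 ((m + 1) / 2))) :
    IsGreatest {r : ℝ | ∃ μ : ℝ,
        (∃ v : Fin (n + m) → ℝ, v ≠ 0 ∧ A.mulVec v = μ • v) ∧ r = |μ|}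
      (if Even m then Real.cos (π / (2 * n + m + 1))
        else if m ≤ 2 * n - 1 then Real.cos (2 * π / (2 * n + m + 1))
        else Real.cos (π / (m + 1))) := by
  have hπ := Real.pi_pos
  have hN : (0:ℝ) < 2 * (n:ℝ) + m + 1 := by positivity
  have hm1 : (0:ℝ) < (m:ℝ) + 1 := by positivity
  have hn' : (1:ℝ) ≤ (n:ℝ) := by exact_mod_cast hn
  have hm' : (1:ℝ) ≤ (m:ℝ) := by exact_mod_cast hm
  constructor
  · -- membership
    split_ifs with he ho
    · -- m even : witness k = n + m/2 in the first family
      have hme : m % 2 = 0 := Nat.even_iff.mp he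
      refine ⟨Real.cos (2 * π * ((n + m / 2 : ℕ):ℝ) / (2 * (n:ℕ) + (m:ℕ) + 1)),
        ?_, ?_⟩
      · show _ ∈ {μ : ℝ | ∃ v : Fin (n + m) → ℝ, v ≠ 0 ∧ A.mulVec v = μ • v}
        rw [hA]
        exact Set.mem_union_left _ ⟨n + m / 2, Set.mem_Icc.mpr ⟨by omega, le_rfl⟩, rfl⟩
      · have hk : 2 * ((m / 2 : ℕ):ℝ) = (m:ℝ) := by
          exact_mod_cast (congrArg (Nat.cast (R := ℝ)) (by omega : 2 * (m / 2) = m))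
        have hang : 2 * π * ((n + m / 2 : ℕ):ℝ) / (2 * (n:ℝ) + (m:ℝ) + 1)
            = π - π / (2 * (n:ℝ) + (m:ℝ) + 1) := by
          push_cast
          field_simp
          linear_combination hk
        rw [hang, Real.cos_pi_sub, abs_neg, abs_of_nonneg]
        apply Real.cos_nonneg_of_mem_Icc
        constructor
        · have : (0:ℝ) ≤ π / (2 * (n:ℝ) + (m:ℝ) + 1) := by positivity
          linarith
        · rw [div_le_div_iff₀ hN two_pos]; nlinarith
    · -- m odd, m ≤ 2n-1 : witness k = 1 in the first family
      refine ⟨Real.cos (2 * π * ((1 : ℕ):ℝ) / (2 * (n:ℕ) + (m:ℕ) + 1)), ?_, ?_⟩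
      · show _ ∈ {μ : ℝ | ∃ v : Fin (n + m) → ℝ, v ≠ 0 ∧ A.mulVec v = μ • v}
        rw [hA]
        exact Set.mem_union_left _ ⟨1, Set.mem_Icc.mpr ⟨le_rfl, by omega⟩, rfl⟩
      · rw [abs_of_nonneg]
        · norm_num
        · apply Real.cos_nonneg_of_mem_Icc
          constructor
          · have : (0:ℝ) ≤ 2 * π * ((1:ℕ):ℝ) / (2 * (n:ℝ) + (m:ℝ) + 1) := by positivity
            linarith
          · rw [div_le_div_iff₀ hN two_pos]; push_cast; nlinarith
    · -- m odd, m > 2n-1 : witness k = (m+1)/2 in the second family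
      have hmo : m % 2 = 1 := Nat.not_even_iff.mp he
      refine ⟨Real.cos (π * ((2 * ((m + 1) / 2) - 1 : ℕ):ℝ) / ((m:ℕ) + 1)), ?_, ?_⟩
      · show _ ∈ {μ : ℝ | ∃ v : Fin (n + m) → ℝ, v ≠ 0 ∧ A.mulVec v = μ • v}
        rw [hA]
        exact Set.mem_union_right _ ⟨(m + 1) / 2, Set.mem_Icc.mpr ⟨by omega, le_rfl⟩, rfl⟩
      · have h : (2 * ((m + 1) / 2) - 1 : ℕ) = m := by omega
        rw [h]
        have hang : π * (m:ℝ) / ((m:ℝ) + 1) = π - π / ((m:ℝ) + 1) := by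
          field_simp; ring
        rw [hang, Real.cos_pi_sub, abs_neg, abs_of_nonneg]
        apply Real.cos_nonneg_of_mem_Icc
        constructor
        · have : (0:ℝ) ≤ π / ((m:ℝ) + 1) := by positivity
          linarith
        · rw [div_le_div_iff₀ hm1 two_pos]; nlinarith
  · -- upper bound
    rintro r ⟨μ, hμ, rfl⟩
    have hμ' : μ ∈ ((fun k : ℕ => Real.cos (2 * π * k / (2 * (n:ℕ) + (m:ℕ) + 1))) ''
          (Set.Icc 1 (n + m / 2))
        ∪ (fun k : ℕ => Real.cos (π * (2 * k - 1 : ℕ) / ((m:ℕ) + 1))) ''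
            (Set.Icc 1 ((m + 1) / 2))) := by
      rw [← hA]; exact hμ
    clear hμ hA
    rename' hμ' => hμ
    split_ifs with he ho
    · -- m even
      have hme : m % 2 = 0 := Nat.even_iff.mp he
      rw [show π / (2 * (n:ℝ) + m + 1) = π * (1 / (2 * (n:ℝ) + m + 1)) by ring]
      rcases hμ with ⟨k, hk, rfl⟩ | ⟨k, hk, rfl⟩
      · obtain ⟨hk1, hk2⟩ := Set.mem_Icc.mp hk
        have hk1' : (1:ℝ) ≤ (k:ℝ) := by exact_mod_cast hk1
        have hk2' : 2 * (k:ℝ) ≤ 2 * (n:ℝ) + m := by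
          have : 2 * k ≤ 2 * n + m := by omega
          exact_mod_cast this
        beta_reduce
        rw [show 2 * π * (k:ℝ) / (2 * (n:ℝ) + m + 1)
            = π * (2 * (k:ℝ) / (2 * (n:ℝ) + m + 1)) by ring]
        apply blossom_abs_cos_le
        · positivity
        · rw [div_le_div_iff₀ hN hN]; nlinarith
        · rw [← add_div, div_le_one hN]; linarith
      · obtain ⟨hk1, hk2⟩ := Set.mem_Icc.mp hk
        have hc : ((2 * k - 1 : ℕ):ℝ) = 2 * (k:ℝ) - 1 := by
          have h1 : 1 ≤ 2 * k := by omega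
          push_cast [h1]; ring
        have hk1' : (1:ℝ) ≤ 2 * (k:ℝ) - 1 := by
          have : 1 ≤ k := hk1
          have := (Nat.one_le_cast (α := ℝ)).mpr this
          linarith
        have hk2' : 2 * (k:ℝ) - 1 ≤ (m:ℝ) - 1 := by
          have : 2 * k - 1 ≤ m - 1 := by omega
          have h2 : 2 * k ≤ m := by omega
          have := (Nat.cast_le (α := ℝ)).mpr h2
          push_cast at this
          linarith
        beta_reduce
        rw [show π * ((2 * k - 1 : ℕ):ℝ) / ((m:ℝ) + 1)
            = π * (((2 * k - 1 : ℕ):ℝ) / ((m:ℝ) + 1)) by ring]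
        apply blossom_abs_cos_le
        · positivity
        · rw [hc, div_le_div_iff₀ hN hm1]; nlinarith
        · rw [hc]
          have e1 : (2 * (k:ℝ) - 1) / ((m:ℝ) + 1) ≤ ((m:ℝ) - 1) / ((m:ℝ) + 1) := by
            rw [div_le_div_iff₀ hm1 hm1]; nlinarith
          have e2 : 1 / (2 * (n:ℝ) + m + 1) ≤ 1 / ((m:ℝ) + 1) := by
            rw [div_le_div_iff₀ hN hm1]; nlinarith
          have e3 : ((m:ℝ) - 1) / ((m:ℝ) + 1) + 1 / ((m:ℝ) + 1) ≤ 1 := by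
            rw [← add_div, div_le_one hm1]; linarith
          linarith
    · -- m odd, m ≤ 2n-1
      have hmo : m % 2 = 1 := Nat.not_even_iff.mp he
      rw [show 2 * π / (2 * (n:ℝ) + m + 1) = π * (2 / (2 * (n:ℝ) + m + 1)) by ring]
      rcases hμ with ⟨k, hk, rfl⟩ | ⟨k, hk, rfl⟩
      · obtain ⟨hk1, hk2⟩ := Set.mem_Icc.mp hk
        have hk1' : (1:ℝ) ≤ (k:ℝ) := by exact_mod_cast hk1
        have hk2' : 2 * (k:ℝ) ≤ 2 * (n:ℝ) + m - 1 := by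
          have : 2 * k + 1 ≤ 2 * n + m := by omega
          have := (Nat.cast_le (α := ℝ)).mpr this
          push_cast at this
          linarith
        beta_reduce
        rw [show 2 * π * (k:ℝ) / (2 * (n:ℝ) + m + 1)
            = π * (2 * (k:ℝ) / (2 * (n:ℝ) + m + 1)) by ring]
        apply blossom_abs_cos_le
        · positivity
        · rw [div_le_div_iff₀ hN hN]; nlinarith
        · rw [← add_div, div_le_one hN]; linarith
      · obtain ⟨hk1, hk2⟩ := Set.mem_Icc.mp hk
        have hc : ((2 * k - 1 : ℕ):ℝ) = 2 * (k:ℝ) - 1 := by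
          have h1 : 1 ≤ 2 * k := by omega
          push_cast [h1]; ring
        have hk1' : (1:ℝ) ≤ 2 * (k:ℝ) - 1 := by
          have := (Nat.one_le_cast (α := ℝ)).mpr hk1
          linarith
        have hk2' : 2 * (k:ℝ) - 1 ≤ (m:ℝ) := by
          have : 2 * k ≤ m + 1 := by omega
          have := (Nat.cast_le (α := ℝ)).mpr this
          push_cast at this
          linarith
        have hNm : 2 * ((m:ℝ) + 1) ≤ 2 * (n:ℝ) + m + 1 := by
          have : 2 * (m + 1) ≤ 2 * n + m + 1 := by omega
          exact_mod_cast this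
        beta_reduce
        rw [show π * ((2 * k - 1 : ℕ):ℝ) / ((m:ℝ) + 1)
            = π * (((2 * k - 1 : ℕ):ℝ) / ((m:ℝ) + 1)) by ring]
        apply blossom_abs_cos_le
        · positivity
        · rw [hc, div_le_div_iff₀ hN hm1]
          nlinarith [mul_le_mul_of_nonneg_right hk1' hN.le]
        · rw [hc, div_add_div _ _ (ne_of_gt hm1) (ne_of_gt hN),
            div_le_one (mul_pos hm1 hN)]
          nlinarith [mul_le_mul_of_nonneg_right hk2' hN.le]
    · -- m odd, m > 2n-1
      have hmo : m % 2 = 1 := Nat.not_even_iff.mp he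
      have hbig : 2 * n ≤ m := by omega
      rw [show π / ((m:ℝ) + 1) = π * (1 / ((m:ℝ) + 1)) by ring]
      rcases hμ with ⟨k, hk, rfl⟩ | ⟨k, hk, rfl⟩
      · obtain ⟨hk1, hk2⟩ := Set.mem_Icc.mp hk
        have hk1' : (1:ℝ) ≤ (k:ℝ) := by exact_mod_cast hk1
        have hk2' : 2 * (k:ℝ) ≤ 2 * (n:ℝ) + m - 1 := by
          have : 2 * k + 1 ≤ 2 * n + m := by omega
          have := (Nat.cast_le (α := ℝ)).mpr this
          push_cast at this
          linarith
        have hNm : 2 * (n:ℝ) + m + 1 ≤ 2 * ((m:ℝ) + 1) := by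
          have : 2 * n + m + 1 ≤ 2 * (m + 1) := by omega
          exact_mod_cast this
        beta_reduce
        rw [show 2 * π * (k:ℝ) / (2 * (n:ℝ) + m + 1)
            = π * (2 * (k:ℝ) / (2 * (n:ℝ) + m + 1)) by ring]
        apply blossom_abs_cos_le
        · positivity
        · rw [div_le_div_iff₀ hm1 hN]
          nlinarith [mul_le_mul_of_nonneg_right hk1' hm1.le]
        · rw [div_add_div _ _ (ne_of_gt hN) (ne_of_gt hm1),
            div_le_one (mul_pos hN hm1)]
          nlinarith [mul_le_mul_of_nonneg_right hk2' hm1.le]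
      · obtain ⟨hk1, hk2⟩ := Set.mem_Icc.mp hk
        have hc : ((2 * k - 1 : ℕ):ℝ) = 2 * (k:ℝ) - 1 := by
          have h1 : 1 ≤ 2 * k := by omega
          push_cast [h1]; ring
        have hk1' : (1:ℝ) ≤ 2 * (k:ℝ) - 1 := by
          have := (Nat.one_le_cast (α := ℝ)).mpr hk1
          linarith
        have hk2' : 2 * (k:ℝ) - 1 ≤ (m:ℝ) := by
          have : 2 * k ≤ m + 1 := by omega
          have := (Nat.cast_le (α := ℝ)).mpr this
          push_cast at this
          linarith
        beta_reduce
        rw [show π * ((2 * k - 1 : ℕ):ℝ) / ((m:ℝ) + 1)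
            = π * (((2 * k - 1 : ℕ):ℝ) / ((m:ℝ) + 1)) by ring]
        apply blossom_abs_cos_le
        · positivity
        · rw [hc, div_le_div_iff₀ hm1 hm1]; nlinarith
        · rw [hc, ← add_div, div_le_one hm1]; linarith
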